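/- For each fixed t ∈ [0,1], the Hashin–Shtrikman upper-bound function v ↦ f^HS(t;v) is strictly increasing on [0,1]; its endpoint values are f^HS(t;0) = κ⁻·t² + μ⁻·(1 − t²) and f^HS(t;1) = κ⁺·t² + μ⁺·(1 − t²); consequently, for every real c with κ⁻·t² + μ⁻·(1 − t²) ≤ c ≤ κ⁺·t² + μ⁺·(1 − t²), there exists exactly one v ∈ [0,1] such that f^HS(t;v) = c. -/

import Mathlib

open Real

/-- The square root `s = √(1 - t²)`. -/
noncomputable def sHS (t : ℝ) : ℝ := Real.sqrt (1 - t ^ 2)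

/-- The Hashin–Shtrikman correction term `q(t; v)` for two well-ordered isotropic
plane-stress phases with bulk moduli `κm < κp` and shear moduli `μm < μp`. -/
noncomputable def qHS (κm κp μm μp t v : ℝ) : ℝ :=
  if v * (κp - κm) * t ≤ (κp + μp - (κp - κm) * v) * sHS t ∧
     v * (μp - μm) * sHS t ≤ (κp + μp - (μp - μm) * v) * t then
    v * (1 - v) * ((κp - κm) * t - (μp - μm) * sHS t) ^ 2 /
      (κp + μp - ((κp - κm) + (μp - μm)) * v)
  else if (κp + μp - (κp - κm) * v) * sHS t < v * (κp - κm) * t then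
    (1 - v) * (v * (κp - κm) ^ 2 * t ^ 2 / (κp + μp - (κp - κm) * v)
      - (μp - μm) * (sHS t) ^ 2)
  else
    (1 - v) * (v * (μp - μm) ^ 2 * (sHS t) ^ 2 / (κp + μp - (μp - μm) * v)
      - (κp - κm) * t ^ 2)

/-- The Hashin–Shtrikman upper-bound function `f^HS(t; v)`:
the Voigt energy minus the correction `q(t; v)`. -/
noncomputable def fHS (κm κp μm μp t v : ℝ) : ℝ :=
  (κm + v * (κp - κm)) * t ^ 2 + (μm + v * (μp - μm)) * (1 - t ^ 2)
    - qHS κm κp μm μp t v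

/-- For each fixed `t ∈ [0,1]`, `v ↦ f^HS(t;v)` is strictly increasing on `[0,1]`,
its endpoint values are the pure-phase energies, and consequently every value
`c` between the endpoint energies is attained by exactly one `v ∈ [0,1]`. -/
noncomputable def gAux (c D B E v : ℝ) : ℝ := v * B - v * (1 - v) * E / (c + (1 - v) * D)

lemma gAux_strictMonoOn {c D B E : ℝ} (hc : 0 < c) (hD : 0 < D) (hB : 0 < B)
    (hE0 : 0 ≤ E) (hE : E ≤ D * B) : StrictMonoOn (gAux c D B E) (Set.Icc 0 1) := by
  intro v1 hv1 v2 hv2 h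
  have hp1 : 0 < c + (1 - v1) * D := by nlinarith [hv1.2, mul_nonneg (sub_nonneg.mpr hv1.2) hD.le]
  have hp2 : 0 < c + (1 - v2) * D := by nlinarith [mul_nonneg (sub_nonneg.mpr hv2.2) hD.le]
  rw [← sub_pos]
  have key : gAux c D B E v2 - gAux c D B E v1 =
      ((v2 - v1) * B * ((c + (1 - v1) * D) * (c + (1 - v2) * D))
        - E * (v2 * (1 - v2) * (c + (1 - v1) * D) - v1 * (1 - v1) * (c + (1 - v2) * D)))
        / ((c + (1 - v1) * D) * (c + (1 - v2) * D)) := by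
    unfold gAux
    generalize c + (1 - v1) * D = P1 at hp1 ⊢
    generalize c + (1 - v2) * D = P2 at hp2 ⊢
    field_simp
    ring
  rw [key]
  apply div_pos _ (mul_pos hp1 hp2)
  have hu : 0 < v2 - v1 := sub_pos.mpr h
  set X := v2 * (1 - v2) * (c + (1 - v1) * D) - v1 * (1 - v1) * (c + (1 - v2) * D) with hX
  have hid : (v2 - v1) * B * ((c + (1 - v1) * D) * (c + (1 - v2) * D))
      = B * (D * X) + (v2 - v1) * B * (c * (c + D)) := by rw [hX]; ring
  rcases le_or_gt X 0 with hX0 | hX0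
  · have h1 : 0 < (v2 - v1) * B * ((c + (1 - v1) * D) * (c + (1 - v2) * D)) :=
      mul_pos (mul_pos hu hB) (mul_pos hp1 hp2)
    nlinarith [mul_nonneg hE0 (neg_nonneg.mpr hX0)]
  · have h1 : 0 ≤ (D * B - E) * X := mul_nonneg (by linarith) hX0.le
    have h2 : 0 < (v2 - v1) * B * (c * (c + D)) :=
      mul_pos (mul_pos hu hB) (mul_pos hc (by linarith))
    nlinarith [h1, h2, hid]

lemma gAux_continuousOn {c D : ℝ} (hc : 0 < c) (hD : 0 < D) (B E : ℝ) :
    ContinuousOn (gAux c D B E) (Set.Icc 0 1) := by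
  unfold gAux
  apply ContinuousOn.sub (Continuous.continuousOn (by continuity))
  apply ContinuousOn.div (Continuous.continuousOn (by continuity))
    (Continuous.continuousOn (by continuity))
  intro v hv
  have : 0 < c + (1 - v) * D := by nlinarith [mul_nonneg (sub_nonneg.mpr hv.2) hD.le]
  exact this.ne'

lemma continuousOn_Icc_glue {f : ℝ → ℝ} {a m b : ℝ} (ham : a ≤ m) (hmb : m ≤ b)
    (h1 : ContinuousOn f (Set.Icc a m)) (h2 : ContinuousOn f (Set.Icc m b)) :
    ContinuousOn f (Set.Icc a b) := by
  rw [← Set.Icc_union_Icc_eq_Icc ham hmb]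
  intro x hx
  rcases hx with hx | hx
  · refine (h1 x hx).union ?_
    by_cases hxm : x ∈ Set.Icc m b
    · exact h2 x hxm
    · exact continuousWithinAt_of_notMem_closure (by rwa [isClosed_Icc.closure_eq])
  · refine ContinuousWithinAt.union ?_ (h2 x hx)
    by_cases hxm : x ∈ Set.Icc a m
    · exact h1 x hxm
    · exact continuousWithinAt_of_notMem_closure (by rwa [isClosed_Icc.closure_eq])

noncomputable def qAux (a b K t s v : ℝ) : ℝ :=
  if v * a * t ≤ (K - a * v) * s ∧ v * b * s ≤ (K - b * v) * t then
    v * (1 - v) * (a * t - b * s) ^ 2 / (K - (a + b) * v)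
  else if (K - a * v) * s < v * a * t then
    (1 - v) * (v * a ^ 2 * t ^ 2 / (K - a * v) - b * s ^ 2)
  else
    (1 - v) * (v * b ^ 2 * s ^ 2 / (K - b * v) - a * t ^ 2)

lemma qAux_eq1 {a b K t s v : ℝ} (h1 : v * a * t ≤ (K - a * v) * s)
    (h2 : v * b * s ≤ (K - b * v) * t) :
    qAux a b K t s v = v * (1 - v) * (a * t - b * s) ^ 2 / (K - (a + b) * v) := by
  unfold qAux; rw [if_pos ⟨h1, h2⟩]

lemma qAux_eq2 {a b K t s v : ℝ}
    (h1 : ¬(v * a * t ≤ (K - a * v) * s ∧ v * b * s ≤ (K - b * v) * t))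
    (h2 : (K - a * v) * s < v * a * t) :
    qAux a b K t s v = (1 - v) * (v * a ^ 2 * t ^ 2 / (K - a * v) - b * s ^ 2) := by
  unfold qAux; rw [if_neg h1, if_pos h2]

lemma qAux_eq3 {a b K t s v : ℝ}
    (h1 : ¬(v * a * t ≤ (K - a * v) * s ∧ v * b * s ≤ (K - b * v) * t))
    (h2 : ¬((K - a * v) * s < v * a * t)) :
    qAux a b K t s v = (1 - v) * (v * b ^ 2 * s ^ 2 / (K - b * v) - a * t ^ 2) := by
  unfold qAux; rw [if_neg h1, if_neg h2]

lemma boundary2 {a b K t s w : ℝ} (ha : 0 < a) (hb : 0 < b) (hc0 : 0 < K - a - b)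
    (hw1 : w ≤ 1) (hbd : w * a * t = (K - a * w) * s) :
    b * s ^ 2 + gAux (K - a) a (a * t ^ 2) (a ^ 2 * t ^ 2) w
      = gAux (K - a - b) (a + b) (a * t ^ 2 + b * s ^ 2) ((a * t - b * s) ^ 2) w := by
  have hd2 : 0 < K - a * w := by nlinarith [mul_nonneg ha.le (sub_nonneg.mpr hw1)]
  have hd1 : 0 < K - (a + b) * w := by
    nlinarith [mul_nonneg (by linarith : (0:ℝ) ≤ a + b) (sub_nonneg.mpr hw1)]
  have hs' : s = w * a * t / (K - a * w) := by
    rw [eq_div_iff hd2.ne']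
    linarith [hbd]
  rw [hs']
  unfold gAux
  have hne2 : K - a + (1 - w) * a ≠ 0 := by
    rw [show K - a + (1 - w) * a = K - a * w from by ring]; exact hd2.ne'
  have hne1 : K - a - b + (1 - w) * (a + b) ≠ 0 := by
    rw [show K - a - b + (1 - w) * (a + b) = K - (a + b) * w from by ring]; exact hd1.ne'
  rw [show K - a + (1 - w) * a = K - a * w from by ring, show K - a - b + (1 - w) * (a + b) = K - a * w - b * w from by ring]
  rw [show K - (a + b) * w = K - a * w - b * w from by ring] at hd1
  generalize K - a * w = X at hd1 hd2 ⊢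
  field_simp
  ring

lemma boundary3 {a b K t s w : ℝ} (ha : 0 < a) (hb : 0 < b) (hc0 : 0 < K - a - b)
    (hw1 : w ≤ 1) (hbd : w * b * s = (K - b * w) * t) :
    a * t ^ 2 + gAux (K - b) b (b * s ^ 2) (b ^ 2 * s ^ 2) w
      = gAux (K - a - b) (a + b) (a * t ^ 2 + b * s ^ 2) ((a * t - b * s) ^ 2) w := by
  have hd3 : 0 < K - b * w := by nlinarith [mul_nonneg hb.le (sub_nonneg.mpr hw1)]
  have hd1 : 0 < K - (a + b) * w := by
    nlinarith [mul_nonneg (by linarith : (0:ℝ) ≤ a + b) (sub_nonneg.mpr hw1)]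
  have ht' : t = w * b * s / (K - b * w) := by
    rw [eq_div_iff hd3.ne']
    linarith [hbd]
  rw [ht']
  unfold gAux
  have hne3 : K - b + (1 - w) * b ≠ 0 := by
    rw [show K - b + (1 - w) * b = K - b * w from by ring]; exact hd3.ne'
  have hne1 : K - a - b + (1 - w) * (a + b) ≠ 0 := by
    rw [show K - a - b + (1 - w) * (a + b) = K - (a + b) * w from by ring]; exact hd1.ne'
  rw [show K - b + (1 - w) * b = K - b * w from by ring, show K - a - b + (1 - w) * (a + b) = K - b * w - a * w from by ring]
  rw [show K - (a + b) * w = K - b * w - a * w from by ring] at hd1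
  generalize K - b * w = X at hd1 hd3 ⊢
  field_simp
  ring

set_option maxHeartbeats 4000000 in
theorem hs_upper_bound_strictMonoOn_endpoints_existsUnique
    (κm κp μm μp : ℝ) (hκm : 0 < κm) (hκ : κm < κp) (hμm : 0 < μm) (hμ : μm < μp)
    (t : ℝ) (ht : t ∈ Set.Icc (0 : ℝ) 1) :
    StrictMonoOn (fun v => fHS κm κp μm μp t v) (Set.Icc (0 : ℝ) 1) ∧
    fHS κm κp μm μp t 0 = κm * t ^ 2 + μm * (1 - t ^ 2) ∧
    fHS κm κp μm μp t 1 = κp * t ^ 2 + μp * (1 - t ^ 2) ∧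
    ∀ c : ℝ, κm * t ^ 2 + μm * (1 - t ^ 2) ≤ c → c ≤ κp * t ^ 2 + μp * (1 - t ^ 2) →
      ∃! v : ℝ, v ∈ Set.Icc (0 : ℝ) 1 ∧ fHS κm κp μm μp t v = c := by
  obtain ⟨ht0, ht1⟩ := ht
  have hs0 : 0 ≤ sHS t := Real.sqrt_nonneg _
  have hs2 : sHS t ^ 2 = 1 - t ^ 2 := by
    unfold sHS; exact Real.sq_sqrt (by nlinarith)
  -- endpoint values (raw form)
  have hend0 : fHS κm κp μm μp t 0 = κm * t ^ 2 + μm * (1 - t ^ 2) := by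
    unfold fHS qHS
    rw [if_pos ⟨by nlinarith [mul_nonneg (by linarith : (0:ℝ) ≤ κp + μp) hs0],
      by nlinarith [mul_nonneg (by linarith : (0:ℝ) ≤ κp + μp) ht0]⟩]
    ring
  have hend1 : fHS κm κp μm μp t 1 = κp * t ^ 2 + μp * (1 - t ^ 2) := by
    unfold fHS qHS
    split_ifs <;> ring
  have hq : ∀ v, qHS κm κp μm μp t v
      = qAux (κp - κm) (μp - μm) (κp + μp) t (sHS t) v := fun _ => rfl
  have hf : ∀ v, fHS κm κp μm μp t v
      = (κm + v * (κp - κm)) * t ^ 2 + (μm + v * (μp - μm)) * (1 - t ^ 2)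
        - qAux (κp - κm) (μp - μm) (κp + μp) t (sHS t) v := by
    intro v; unfold fHS; rw [hq]
  set s := sHS t with hs_def
  set a := κp - κm with ha_def
  set b := μp - μm with hb_def
  set K := κp + μp with hK_def
  clear_value s a b K
  have ha : 0 < a := by rw [ha_def]; linarith
  have hb : 0 < b := by rw [hb_def]; linarith
  have hKpos : 0 < K := by rw [hK_def]; linarith
  have hc0 : 0 < K - a - b := by rw [ha_def, hb_def, hK_def]; linarith
  have hKa : 0 < K - a := by rw [ha_def, hK_def]; linarith
  have hKb : 0 < K - b := by rw [hb_def, hK_def]; linarith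
  have hab : 0 < a + b := by linarith
  have hts : 0 < t + s := by nlinarith [sq_nonneg (t + s), mul_nonneg ht0 hs0]
  have hd1pos : ∀ v : ℝ, v ≤ 1 → 0 < K - (a + b) * v := by
    intro v hv; nlinarith [mul_nonneg hab.le (sub_nonneg.mpr hv)]
  have hd2pos : ∀ v : ℝ, v ≤ 1 → 0 < K - a * v := by
    intro v hv; nlinarith [mul_nonneg ha.le (sub_nonneg.mpr hv)]
  have hd3pos : ∀ v : ℝ, v ≤ 1 → 0 < K - b * v := by
    intro v hv; nlinarith [mul_nonneg hb.le (sub_nonneg.mpr hv)]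
  -- branch formulas
  have hF1 : ∀ v ∈ Set.Icc (0:ℝ) 1,
      (v * a * t ≤ (K - a * v) * s ∧ v * b * s ≤ (K - b * v) * t) →
      fHS κm κp μm μp t v = κm * t ^ 2 + μm * s ^ 2
        + gAux (K - a - b) (a + b) (a * t ^ 2 + b * s ^ 2) ((a * t - b * s) ^ 2) v := by
    intro v hv hcond
    rw [hf v, qAux_eq1 hcond.1 hcond.2, ← hs2]
    have hne1 : K - (a + b) * v ≠ 0 := (hd1pos v hv.2).ne'
    have hne2 : K - a - b + (1 - v) * (a + b) ≠ 0 := by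
      rw [show K - a - b + (1 - v) * (a + b) = K - (a + b) * v from by ring]; exact hne1
    unfold gAux
    rw [show K - a - b + (1 - v) * (a + b) = K - (a + b) * v from by ring]
    generalize K - (a + b) * v = Y at hne1 ⊢
    field_simp
    ring
  have hF2 : ∀ v ∈ Set.Icc (0:ℝ) 1,
      ¬(v * a * t ≤ (K - a * v) * s ∧ v * b * s ≤ (K - b * v) * t) →
      ((K - a * v) * s < v * a * t) →
      fHS κm κp μm μp t v = κm * t ^ 2 + (μm + b) * s ^ 2
        + gAux (K - a) a (a * t ^ 2) (a ^ 2 * t ^ 2) v := by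
    intro v hv h1 h2
    rw [hf v, qAux_eq2 h1 h2, ← hs2]
    have hne1 : K - a * v ≠ 0 := (hd2pos v hv.2).ne'
    have hne2 : K - a + (1 - v) * a ≠ 0 := by
      rw [show K - a + (1 - v) * a = K - a * v from by ring]; exact hne1
    unfold gAux
    rw [show K - a + (1 - v) * a = K - a * v from by ring]
    generalize K - a * v = Y at hne1 ⊢
    field_simp
    ring
  have hF3 : ∀ v ∈ Set.Icc (0:ℝ) 1,
      ¬(v * a * t ≤ (K - a * v) * s ∧ v * b * s ≤ (K - b * v) * t) →
      ¬((K - a * v) * s < v * a * t) →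
      fHS κm κp μm μp t v = (κm + a) * t ^ 2 + μm * s ^ 2
        + gAux (K - b) b (b * s ^ 2) (b ^ 2 * s ^ 2) v := by
    intro v hv h1 h2
    rw [hf v, qAux_eq3 h1 h2, ← hs2]
    have hne1 : K - b * v ≠ 0 := (hd3pos v hv.2).ne'
    have hne2 : K - b + (1 - v) * b ≠ 0 := by
      rw [show K - b + (1 - v) * b = K - b * v from by ring]; exact hne1
    unfold gAux
    rw [show K - b + (1 - v) * b = K - b * v from by ring]
    generalize K - b * v = Y at hne1 ⊢
    field_simp
    ring
  -- thresholds
  have hats : 0 < a * (t + s) := mul_pos ha hts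
  have hbts : 0 < b * (t + s) := mul_pos hb hts
  set w2 := K * s / (a * (t + s)) with hw2_def
  set w3 := K * t / (b * (t + s)) with hw3_def
  clear_value w2 w3
  have hiff2 : ∀ v : ℝ, (v * a * t ≤ (K - a * v) * s ↔ v ≤ w2) := by
    intro v
    rw [hw2_def, le_div_iff₀ hats]
    constructor <;> intro h <;> linarith
  have hiff2' : ∀ v : ℝ, ((K - a * v) * s < v * a * t ↔ w2 < v) := by
    intro v
    rw [hw2_def, div_lt_iff₀ hats]
    constructor <;> intro h <;> linarith
  have hiff3 : ∀ v : ℝ, (v * b * s ≤ (K - b * v) * t ↔ v ≤ w3) := by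
    intro v
    rw [hw3_def, le_div_iff₀ hbts]
    constructor <;> intro h <;> linarith
  have hiff3' : ∀ v : ℝ, ((K - b * v) * t < v * b * s ↔ w3 < v) := by
    intro v
    rw [hw3_def, div_lt_iff₀ hbts]
    constructor <;> intro h <;> linarith
  have hw2_0 : 0 ≤ w2 := by
    rw [hw2_def]; exact div_nonneg (mul_nonneg hKpos.le hs0) hats.le
  have hw3_0 : 0 ≤ w3 := by
    rw [hw3_def]; exact div_nonneg (mul_nonneg hKpos.le ht0) hbts.le
  have hbd2 : w2 * a * t = (K - a * w2) * s := by
    rw [hw2_def]; field_simp; ring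
  have hbd3 : w3 * b * s = (K - b * w3) * t := by
    rw [hw3_def]; field_simp; ring
  -- gAux parameter facts
  have hB1 : 0 < a * t ^ 2 + b * s ^ 2 := by
    have hsum : a * s ^ 2 + a * t ^ 2 = a := by rw [hs2]; ring
    have hsum' : b * s ^ 2 + b * t ^ 2 = b := by rw [hs2]; ring
    rcases le_total a b with h | h
    · nlinarith [mul_nonneg (sub_nonneg.mpr h) (sq_nonneg s)]
    · nlinarith [mul_nonneg (sub_nonneg.mpr h) (sq_nonneg t)]
  have hE1 : (a * t - b * s) ^ 2 ≤ (a + b) * (a * t ^ 2 + b * s ^ 2) := by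
    nlinarith [mul_nonneg (mul_nonneg ha.le hb.le) (sq_nonneg (t + s))]
  have hg1 := gAux_strictMonoOn hc0 hab hB1 (sq_nonneg _) hE1
  -- exclusivity
  have hExcl : ∀ v ∈ Set.Icc (0:ℝ) 1,
      (K - a * v) * s < v * a * t → (K - b * v) * t < v * b * s → False := by
    intro v hv h2 h3
    have hd2 := hd2pos v hv.2
    have hd3 := hd3pos v hv.2
    have h02 : 0 ≤ (K - a * v) * s := mul_nonneg hd2.le hs0
    have h03 : 0 ≤ (K - b * v) * t := mul_nonneg hd3.le ht0
    have ht' : 0 < t := by nlinarith [mul_nonneg hv.1 ha.le]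
    have hs' : 0 < s := by nlinarith [mul_nonneg hv.1 hb.le]
    have hm := mul_lt_mul'' h2 h3 h02 h03
    have hb2 : b < K - a * v := by nlinarith [mul_nonneg ha.le (sub_nonneg.mpr hv.2)]
    have ha3 : a < K - b * v := by nlinarith [mul_nonneg hb.le (sub_nonneg.mpr hv.2)]
    have h4 := mul_lt_mul'' hb2 ha3 hb.le ha.le
    have key1 : 0 < ((K - a * v) * (K - b * v) - b * a) * (t * s) :=
      mul_pos (sub_pos.mpr h4) (mul_pos ht' hs')
    have key2 : 0 ≤ (1 - v ^ 2) * (a * b * (t * s)) := by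
      apply mul_nonneg (by nlinarith [hv.1, hv.2])
      positivity
    nlinarith [hm, key1, key2]
  -- strict monotonicity
  have hsm : StrictMonoOn (fun v => fHS κm κp μm μp t v) (Set.Icc (0:ℝ) 1) := by
    intro v1 hv1 v2 hv2 h12
    show fHS κm κp μm μp t v1 < fHS κm κp μm μp t v2
    by_cases hR1 : v1 * a * t ≤ (K - a * v1) * s ∧ v1 * b * s ≤ (K - b * v1) * t
    · by_cases hR2 : v2 * a * t ≤ (K - a * v2) * s ∧ v2 * b * s ≤ (K - b * v2) * t
      · rw [hF1 v1 hv1 hR1, hF1 v2 hv2 hR2]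
        have := hg1 hv1 hv2 h12
        linarith
      · by_cases hC2 : (K - a * v2) * s < v2 * a * t
        · -- v2 in region 2, v1 in region 1
          have h02 : 0 ≤ (K - a * v2) * s := mul_nonneg (hd2pos v2 hv2.2).le hs0
          have htpos : 0 < t := by nlinarith [mul_nonneg hv2.1 ha.le]
          have hw2v2 : w2 < v2 := (hiff2' v2).mp hC2
          have hv1w : v1 ≤ w2 := (hiff2 v1).mp hR1.1
          have hw2mem : w2 ∈ Set.Icc (0:ℝ) 1 := ⟨hw2_0, le_trans hw2v2.le hv2.2⟩
          have hg2 := gAux_strictMonoOn hKa ha (mul_pos ha (pow_pos htpos 2))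
            (by positivity : (0:ℝ) ≤ a ^ 2 * t ^ 2) (le_of_eq (by ring : a ^ 2 * t ^ 2 = a * (a * t ^ 2)))
          have hbnd := boundary2 ha hb hc0 hw2mem.2 hbd2
          have step1 : gAux (K - a - b) (a + b) (a * t ^ 2 + b * s ^ 2)
              ((a * t - b * s) ^ 2) v1
              ≤ gAux (K - a - b) (a + b) (a * t ^ 2 + b * s ^ 2)
              ((a * t - b * s) ^ 2) w2 := hg1.monotoneOn hv1 hw2mem hv1w
          have step2 : gAux (K - a) a (a * t ^ 2) (a ^ 2 * t ^ 2) w2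
              < gAux (K - a) a (a * t ^ 2) (a ^ 2 * t ^ 2) v2 := hg2 hw2mem hv2 hw2v2
          rw [hF1 v1 hv1 hR1, hF2 v2 hv2 hR2 hC2]
          linarith
        · -- v2 in region 3, v1 in region 1
          have h1' : v2 * a * t ≤ (K - a * v2) * s := not_lt.mp hC2
          have hC3 : (K - b * v2) * t < v2 * b * s := by
            rcases not_and_or.mp hR2 with h | h
            · exact absurd h1' h
            · exact not_le.mp h
          have h03 : 0 ≤ (K - b * v2) * t := mul_nonneg (hd3pos v2 hv2.2).le ht0
          have hspos : 0 < s := by nlinarith [mul_nonneg hv2.1 hb.le]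
          have hw3v2 : w3 < v2 := (hiff3' v2).mp hC3
          have hv1w : v1 ≤ w3 := (hiff3 v1).mp hR1.2
          have hw3mem : w3 ∈ Set.Icc (0:ℝ) 1 := ⟨hw3_0, le_trans hw3v2.le hv2.2⟩
          have hg3 := gAux_strictMonoOn hKb hb (mul_pos hb (pow_pos hspos 2))
            (by positivity : (0:ℝ) ≤ b ^ 2 * s ^ 2) (le_of_eq (by ring : b ^ 2 * s ^ 2 = b * (b * s ^ 2)))
          have hbnd := boundary3 ha hb hc0 hw3mem.2 hbd3
          have step1 : gAux (K - a - b) (a + b) (a * t ^ 2 + b * s ^ 2)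
              ((a * t - b * s) ^ 2) v1
              ≤ gAux (K - a - b) (a + b) (a * t ^ 2 + b * s ^ 2)
              ((a * t - b * s) ^ 2) w3 := hg1.monotoneOn hv1 hw3mem hv1w
          have step2 : gAux (K - b) b (b * s ^ 2) (b ^ 2 * s ^ 2) w3
              < gAux (K - b) b (b * s ^ 2) (b ^ 2 * s ^ 2) v2 := hg3 hw3mem hv2 hw3v2
          rw [hF1 v1 hv1 hR1, hF3 v2 hv2 hR2 hC2]
          linarith
    · by_cases hC2 : (K - a * v1) * s < v1 * a * t
      · -- both in region 2
        have h02 : 0 ≤ (K - a * v1) * s := mul_nonneg (hd2pos v1 hv1.2).le hs0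
        have htpos : 0 < t := by nlinarith [mul_nonneg hv1.1 ha.le]
        have hC2' : (K - a * v2) * s < v2 * a * t := by
          have e1 : (K - a * v2) * s ≤ (K - a * v1) * s := by
            nlinarith [mul_nonneg (mul_nonneg ha.le (sub_nonneg.mpr h12.le)) hs0]
          have e2 : v1 * a * t ≤ v2 * a * t := by
            nlinarith [mul_nonneg (mul_nonneg (sub_nonneg.mpr h12.le) ha.le) htpos.le]
          linarith
        have hR2 : ¬(v2 * a * t ≤ (K - a * v2) * s ∧ v2 * b * s ≤ (K - b * v2) * t) :=
          fun hh => absurd hC2' (not_lt.mpr hh.1)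
        have hg2 := gAux_strictMonoOn hKa ha (mul_pos ha (pow_pos htpos 2))
          (by positivity : (0:ℝ) ≤ a ^ 2 * t ^ 2) (le_of_eq (by ring : a ^ 2 * t ^ 2 = a * (a * t ^ 2)))
        rw [hF2 v1 hv1 hR1 hC2, hF2 v2 hv2 hR2 hC2']
        have := hg2 hv1 hv2 h12
        linarith
      · -- both in region 3
        have h1' : v1 * a * t ≤ (K - a * v1) * s := not_lt.mp hC2
        have hC3 : (K - b * v1) * t < v1 * b * s := by
          rcases not_and_or.mp hR1 with h | h
          · exact absurd h1' h
          · exact not_le.mp h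
        have h03 : 0 ≤ (K - b * v1) * t := mul_nonneg (hd3pos v1 hv1.2).le ht0
        have hspos : 0 < s := by nlinarith [mul_nonneg hv1.1 hb.le]
        have hC3' : (K - b * v2) * t < v2 * b * s := by
          have e1 : (K - b * v2) * t ≤ (K - b * v1) * t := by
            nlinarith [mul_nonneg (mul_nonneg hb.le (sub_nonneg.mpr h12.le)) ht0]
          have e2 : v1 * b * s ≤ v2 * b * s := by
            nlinarith [mul_nonneg (mul_nonneg (sub_nonneg.mpr h12.le) hb.le) hspos.le]
          linarith
        have hR2 : ¬(v2 * a * t ≤ (K - a * v2) * s ∧ v2 * b * s ≤ (K - b * v2) * t) :=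
          fun hh => absurd hC3' (not_lt.mpr hh.2)
        have hC2'' : ¬((K - a * v2) * s < v2 * a * t) :=
          fun hcc => hExcl v2 hv2 hcc hC3'
        have hg3 := gAux_strictMonoOn hKb hb (mul_pos hb (pow_pos hspos 2))
          (by positivity : (0:ℝ) ≤ b ^ 2 * s ^ 2) (le_of_eq (by ring : b ^ 2 * s ^ 2 = b * (b * s ^ 2)))
        rw [hF3 v1 hv1 hR1 hC2, hF3 v2 hv2 hR2 hC2'']
        have := hg3 hv1 hv2 h12
        linarith
  -- continuity
  have hcont : ContinuousOn (fun v => fHS κm κp μm μp t v) (Set.Icc (0:ℝ) 1) := by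
    rcases le_total w2 w3 with hw | hw
    · by_cases h1 : (1:ℝ) ≤ w2
      · refine ContinuousOn.congr
          ((continuousOn_const (c := κm * t ^ 2 + μm * s ^ 2)).add
            (gAux_continuousOn hc0 hab (a * t ^ 2 + b * s ^ 2) ((a * t - b * s) ^ 2))) ?_
        intro v hv
        exact hF1 v hv ⟨(hiff2 v).mpr (le_trans hv.2 h1),
          (hiff3 v).mpr (le_trans (le_trans hv.2 h1) hw)⟩
      · push_neg at h1
        apply continuousOn_Icc_glue hw2_0 h1.le
        · refine ContinuousOn.congr
            ((((continuousOn_const (c := κm * t ^ 2 + μm * s ^ 2)).add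
              (gAux_continuousOn hc0 hab (a * t ^ 2 + b * s ^ 2) ((a * t - b * s) ^ 2)))).mono
              (Set.Icc_subset_Icc_right h1.le)) ?_
          intro v hv
          exact hF1 v ⟨hv.1, le_trans hv.2 h1.le⟩
            ⟨(hiff2 v).mpr hv.2, (hiff3 v).mpr (le_trans hv.2 hw)⟩
        · refine ContinuousOn.congr
            ((((continuousOn_const (c := κm * t ^ 2 + (μm + b) * s ^ 2)).add
              (gAux_continuousOn hKa ha (a * t ^ 2) (a ^ 2 * t ^ 2)))).mono
              (Set.Icc_subset_Icc_left hw2_0)) ?_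
          intro v hv
          rcases eq_or_lt_of_le hv.1 with heq | hlt
          · rw [← heq]
            show fHS κm κp μm μp t w2 = κm * t ^ 2 + (μm + b) * s ^ 2
              + gAux (K - a) a (a * t ^ 2) (a ^ 2 * t ^ 2) w2
            rw [hF1 w2 ⟨hw2_0, h1.le⟩ ⟨(hiff2 w2).mpr le_rfl, (hiff3 w2).mpr hw⟩]
            have hbnd := boundary2 ha hb hc0 h1.le hbd2
            linarith
          · have hC2 : (K - a * v) * s < v * a * t := (hiff2' v).mpr hlt
            have hR1 : ¬(v * a * t ≤ (K - a * v) * s ∧ v * b * s ≤ (K - b * v) * t) :=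
              fun hh => absurd ((hiff2 v).mp hh.1) (not_le.mpr hlt)
            exact hF2 v ⟨le_trans hw2_0 hv.1, hv.2⟩ hR1 hC2
    · by_cases h1 : (1:ℝ) ≤ w3
      · refine ContinuousOn.congr
          ((continuousOn_const (c := κm * t ^ 2 + μm * s ^ 2)).add
            (gAux_continuousOn hc0 hab (a * t ^ 2 + b * s ^ 2) ((a * t - b * s) ^ 2))) ?_
        intro v hv
        exact hF1 v hv ⟨(hiff2 v).mpr (le_trans (le_trans hv.2 h1) hw),
          (hiff3 v).mpr (le_trans hv.2 h1)⟩
      · push_neg at h1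
        apply continuousOn_Icc_glue hw3_0 h1.le
        · refine ContinuousOn.congr
            ((((continuousOn_const (c := κm * t ^ 2 + μm * s ^ 2)).add
              (gAux_continuousOn hc0 hab (a * t ^ 2 + b * s ^ 2) ((a * t - b * s) ^ 2)))).mono
              (Set.Icc_subset_Icc_right h1.le)) ?_
          intro v hv
          exact hF1 v ⟨hv.1, le_trans hv.2 h1.le⟩
            ⟨(hiff2 v).mpr (le_trans hv.2 hw), (hiff3 v).mpr hv.2⟩
        · refine ContinuousOn.congr
            ((((continuousOn_const (c := (κm + a) * t ^ 2 + μm * s ^ 2)).add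
              (gAux_continuousOn hKb hb (b * s ^ 2) (b ^ 2 * s ^ 2)))).mono
              (Set.Icc_subset_Icc_left hw3_0)) ?_
          intro v hv
          rcases eq_or_lt_of_le hv.1 with heq | hlt
          · rw [← heq]
            show fHS κm κp μm μp t w3 = (κm + a) * t ^ 2 + μm * s ^ 2
              + gAux (K - b) b (b * s ^ 2) (b ^ 2 * s ^ 2) w3
            rw [hF1 w3 ⟨hw3_0, h1.le⟩ ⟨(hiff2 w3).mpr hw, (hiff3 w3).mpr le_rfl⟩]
            have hbnd := boundary3 ha hb hc0 h1.le hbd3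
            linarith
          · have hC3 : (K - b * v) * t < v * b * s := (hiff3' v).mpr hlt
            have hR1 : ¬(v * a * t ≤ (K - a * v) * s ∧ v * b * s ≤ (K - b * v) * t) :=
              fun hh => absurd ((hiff3 v).mp hh.2) (not_le.mpr hlt)
            have hC2 : ¬((K - a * v) * s < v * a * t) :=
              fun hcc => hExcl v ⟨le_trans hw3_0 hv.1, hv.2⟩ hcc hC3
            exact hF3 v ⟨le_trans hw3_0 hv.1, hv.2⟩ hR1 hC2
  refine ⟨hsm, hend0, hend1, ?_⟩
  intro c hc1 hc2
  have hIcc : c ∈ Set.Icc (fHS κm κp μm μp t 0) (fHS κm κp μm μp t 1) := by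
    rw [hend0, hend1]; exact ⟨hc1, hc2⟩
  obtain ⟨v, hv, hfv⟩ := intermediate_value_Icc zero_le_one hcont hIcc
  exact ⟨v, ⟨hv, hfv⟩, fun u hu => hsm.injOn hu.1 hv (hu.2.trans hfv.symm)⟩
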